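/- Let X be a d×d real symmetric matrix with X ⪯ I. Then the matrix exponential satisfies exp(X) ⪯ I + X + X². -/

import Mathlib

open Matrix

lemma real_exp_le_one_add_add_sq {x : ℝ} (hx : x ≤ 1) :
    Real.exp x ≤ 1 + x + x ^ 2 := by
  rcases le_or_gt x (-1) with h | h
  · have h1 : Real.exp x ≤ 1 := Real.exp_le_one_iff.mpr (by linarith)
    nlinarith [sq_nonneg (x + 1)]
  · have habs : |x| ≤ 1 := abs_le.mpr ⟨by linarith, hx⟩
    have hb := Real.exp_bound habs (n := 3) (by norm_num)
    have hsum : ∑ m ∈ Finset.range 3, x ^ m / (Nat.factorial m) = 1 + x + x ^ 2 / 2 := by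
      norm_num [Finset.sum_range_succ, Nat.factorial]
    rw [hsum] at hb
    have h2 := (abs_sub_le_iff.1 hb).1
    norm_num [Nat.factorial] at h2
    have h3 : |x| ^ 3 ≤ x ^ 2 := by
      calc |x| ^ 3 ≤ |x| ^ 2 := pow_le_pow_of_le_one (abs_nonneg x) habs (by norm_num)
        _ = x ^ 2 := sq_abs x
    nlinarith [sq_nonneg x]

/-- For a real symmetric matrix `X ⪯ I`, `exp(X) ⪯ I + X + X²` (Loewner order). -/
theorem matrix_exp_le_one_add_add_sq
    {d : ℕ} (X : Matrix (Fin d) (Fin d) ℝ) (hX : X.IsHermitian)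
    (hXle : ((1 : Matrix (Fin d) (Fin d) ℝ) - X).PosSemidef) :
    ((1 + X + X ^ 2) - NormedSpace.exp X).PosSemidef := by
  set U : Matrix (Fin d) (Fin d) ℝ := (hX.eigenvectorUnitary : Matrix (Fin d) (Fin d) ℝ) with hU
  set lam : Fin d → ℝ := hX.eigenvalues with hlam
  set D : Matrix (Fin d) (Fin d) ℝ := Matrix.diagonal lam with hD
  have hUU : U * star U = 1 := (Matrix.mem_unitaryGroup_iff).mp hX.eigenvectorUnitary.2
  have hUU' : star U * U = 1 := (Matrix.mem_unitaryGroup_iff').mp hX.eigenvectorUnitary.2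
  have hUinv : U⁻¹ = star U := Matrix.inv_eq_right_inv hUU
  have hspec : X = U * D * star U := by
    have := hX.spectral_theorem
    simpa using this
  -- product of two conjugated matrices
  have hmul : ∀ A B : Matrix (Fin d) (Fin d) ℝ,
      (U * A * star U) * (U * B * star U) = U * (A * B) * star U := by
    intro A B
    calc (U * A * star U) * (U * B * star U)
        = U * (A * ((star U * U) * (B * star U))) := by simp only [Matrix.mul_assoc]
      _ = U * (A * B) * star U := by rw [hUU', Matrix.one_mul]; simp only [Matrix.mul_assoc]
  -- eigenvalues ≤ 1
  have hdiag : (Matrix.diagonal (fun i => 1 - lam i) :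
      Matrix (Fin d) (Fin d) ℝ).PosSemidef := by
    have h1 : (star U * ((1 : Matrix (Fin d) (Fin d) ℝ) - X) * (star U)ᴴ).PosSemidef :=
      hXle.mul_mul_conjTranspose_same (star U)
    have h2 : star U * ((1 : Matrix (Fin d) (Fin d) ℝ) - X) * (star U)ᴴ =
        Matrix.diagonal (fun i => 1 - lam i) := by
      rw [← Matrix.star_eq_conjTranspose, star_star, Matrix.mul_sub, Matrix.sub_mul,
        Matrix.mul_one, hUU', hspec]
      have : star U * (U * D * star U) * U = D := by
        calc star U * (U * D * star U) * U
            = (star U * U) * (D * (star U * U)) := by simp only [Matrix.mul_assoc]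
          _ = D := by rw [hUU', Matrix.one_mul, Matrix.mul_one]
      rw [this, hD]
      ext i j
      rcases eq_or_ne i j with h | h <;> simp [Matrix.one_apply, h]
    rwa [h2] at h1
  have hle1 : ∀ i, lam i ≤ 1 := by
    intro i
    have := (Matrix.posSemidef_diagonal_iff.mp hdiag) i
    linarith
  -- exponential
  have hexp : NormedSpace.exp X = U * Matrix.diagonal (fun i => Real.exp (lam i)) * star U := by
    rw [hspec, ← hUinv, Matrix.exp_conj U _ ⟨⟨U, star U, hUU, hUU'⟩, rfl⟩,
      hUinv, Matrix.exp_diagonal]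
    congr 2
    funext i
    rw [Pi.exp_def, Real.exp_eq_exp_ℝ]
  -- the diagonal inner matrix
  have hEdiag : (1 : Matrix (Fin d) (Fin d) ℝ) + D + D * D
      - Matrix.diagonal (fun i => Real.exp (lam i))
      = Matrix.diagonal (fun i => 1 + lam i + lam i ^ 2 - Real.exp (lam i)) := by
    rw [hD, Matrix.diagonal_mul_diagonal]
    ext i j
    rcases eq_or_ne i j with h | h <;> simp [Matrix.one_apply, h]
    ring
  -- key decomposition
  have hsq : X ^ 2 = U * (D * D) * star U := by
    rw [pow_two, hspec, hmul]
  have hone : (1 : Matrix (Fin d) (Fin d) ℝ) = U * 1 * star U := by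
    rw [Matrix.mul_one, hUU]
  have hkey : (1 + X + X ^ 2) - NormedSpace.exp X =
      U * Matrix.diagonal (fun i => 1 + lam i + lam i ^ 2 - Real.exp (lam i)) * star U := by
    rw [← hEdiag, Matrix.mul_sub, Matrix.mul_add, Matrix.mul_add, Matrix.sub_mul,
      Matrix.add_mul, Matrix.add_mul]
    rw [← hone, ← hspec, ← hsq, ← hexp]
  rw [hkey]
  have hpsd : (Matrix.diagonal (fun i => 1 + lam i + lam i ^ 2 - Real.exp (lam i)) :
      Matrix (Fin d) (Fin d) ℝ).PosSemidef := by
    refine Matrix.posSemidef_diagonal_iff.mpr fun i => ?_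
    have := real_exp_le_one_add_add_sq (hle1 i)
    linarith
  have h := hpsd.mul_mul_conjTranspose_same U
  rwa [← Matrix.star_eq_conjTranspose] at h
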